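/- Exponential generating function for sequence A005425: for n ≥ 0 let β_n = Σ_π 2^{s(π)}, the sum over all set partitions π of {1,…,n} all of whose blocks have size at most 2, where s(π) is the number of singleton blocks of π (so β_0 = 1 and the sequence begins 1, 2, 5, 14, 43, 142, …). Then in ℚ[[X]] one has Σ_{n≥0} β_n X^n/n! = exp( 2X + X²/2 ), where exp is applied to a power series with zero constant term. -/

import Mathlib

/-- A set partition of `{1,…,n}` (modelled as `Fin n`). -/
def IsSetPartition (n : ℕ) (π : Finset (Finset (Fin n))) : Prop :=
  (∀ B ∈ π, B.Nonempty) ∧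
  (∀ B ∈ π, ∀ C ∈ π, B ≠ C → B ∩ C = ∅) ∧
  π.sup id = Finset.univ

open scoped Classical in
/-- The set of all set partitions of `{1,…,n}`. -/
noncomputable def setPartitions (n : ℕ) : Finset (Finset (Finset (Fin n))) :=
  Finset.univ.filter (IsSetPartition n)

open scoped Classical in
/-- `β_n = Σ_π 2^{s(π)}`, summed over the set partitions of `{1,…,n}` all of
whose blocks have size at most `2`, where `s(π)` is the number of singleton
blocks (sequence A005425). -/
noncomputable def betaS (n : ℕ) : ℚ :=
  ∑ π ∈ (setPartitions n).filter (fun π => ∀ B ∈ π, B.card ≤ 2),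
    (2 : ℚ) ^ (π.filter (fun B => B.card = 1)).card

/-- The exponential `Σ_{k≥0} F^k / k!` of a power series `F` with zero constant
term, computed coefficientwise. -/
noncomputable def expComp (F : PowerSeries ℚ) : PowerSeries ℚ :=
  PowerSeries.mk fun n => ∑ k ∈ Finset.range (n + 1),
    (k.factorial : ℚ)⁻¹ * PowerSeries.coeff (R := ℚ) n (F ^ k)

open scoped Classical

noncomputable def G : ℕ → ℚ
  | 0 => 1
  | 1 => 2
  | (n+2) => 2 * G (n+1) + (n+1) * G n

lemma G_succ (m : ℕ) : G (m+1) = 2 * G m + m * G (m-1) := by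
  cases m with
  | zero => simp [G]
  | succ k => simp [G]

noncomputable def parts (N : ℕ) (s : Finset (Fin N)) : Finset (Finset (Finset (Fin N))) :=
  Finset.univ.filter (fun π => (∀ B ∈ π, B.Nonempty) ∧
    (∀ B ∈ π, ∀ C ∈ π, B ≠ C → B ∩ C = ∅) ∧ π.sup id = s ∧ ∀ B ∈ π, B.card ≤ 2)

lemma mem_parts {N : ℕ} {s : Finset (Fin N)} {π : Finset (Finset (Fin N))} :
    π ∈ parts N s ↔ (∀ B ∈ π, B.Nonempty) ∧
      (∀ B ∈ π, ∀ C ∈ π, B ≠ C → B ∩ C = ∅) ∧ π.sup id = s ∧ ∀ B ∈ π, B.card ≤ 2 := by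
  simp [parts]

lemma block_subset {N : ℕ} {s : Finset (Fin N)} {π : Finset (Finset (Fin N))}
    (h : π ∈ parts N s) {B : Finset (Fin N)} (hB : B ∈ π) : B ⊆ s := by
  rw [mem_parts] at h
  rw [← h.2.2.1]
  exact Finset.le_sup (f := id) hB

-- inserting a new block D (disjoint from s) into a partition of s

lemma insert_block_mem {N : ℕ} {s : Finset (Fin N)} {π : Finset (Finset (Fin N))}
    (h : π ∈ parts N s) {D : Finset (Fin N)} (hD : D.Nonempty) (hDcard : D.card ≤ 2)
    (hdisj : D ∩ s = ∅) : insert D π ∈ parts N (D ∪ s) := by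
  rw [mem_parts] at h ⊢
  obtain ⟨h1, h2, h3, h4⟩ := h
  have hsub : ∀ C ∈ π, C ⊆ s := by
    intro C hC
    rw [← h3]; exact Finset.le_sup (f := id) hC
  refine ⟨?_, ?_, ?_, ?_⟩
  · intro B hB
    rcases Finset.mem_insert.1 hB with rfl | hB
    · exact hD
    · exact h1 B hB
  · intro B hB C hC hne
    rcases Finset.mem_insert.1 hB with rfl | hB'
    all_goals rcases Finset.mem_insert.1 hC with rfl | hC'
    · exact absurd rfl hne
    · apply Finset.eq_empty_of_forall_notMem
      intro x hx
      have hx1 := (Finset.mem_inter.1 hx).1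
      have hx2 := hsub C hC' (Finset.mem_inter.1 hx).2
      have hxx : x ∈ B ∩ s := Finset.mem_inter.2 ⟨hx1, hx2⟩
      rw [hdisj] at hxx; exact Finset.notMem_empty x hxx
    · apply Finset.eq_empty_of_forall_notMem
      intro x hx
      have hx1 := hsub B hB' (Finset.mem_inter.1 hx).1
      have hx2 := (Finset.mem_inter.1 hx).2
      have hxx : x ∈ C ∩ s := Finset.mem_inter.2 ⟨hx2, hx1⟩
      rw [hdisj] at hxx; exact Finset.notMem_empty x hxx
    · exact h2 B hB' C hC' hne
  · rw [Finset.sup_insert, h3]; rfl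
  · intro B hB
    rcases Finset.mem_insert.1 hB with rfl | hB
    · exact hDcard
    · exact h4 B hB

lemma new_block_not_mem {N : ℕ} {s : Finset (Fin N)} {π : Finset (Finset (Fin N))}
    (h : π ∈ parts N s) {D : Finset (Fin N)} (hD : D.Nonempty)
    (hdisj : D ∩ s = ∅) : D ∉ π := by
  intro hmem
  obtain ⟨x, hx⟩ := hD
  have := block_subset h hmem hx
  have : x ∈ D ∩ s := Finset.mem_inter.2 ⟨hx, this⟩
  rw [hdisj] at this; exact Finset.notMem_empty x this

-- removing the block containing a

lemma erase_block_mem {N : ℕ} {s : Finset (Fin N)} {π : Finset (Finset (Fin N))}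
    (h : π ∈ parts N s) {B : Finset (Fin N)} (hB : B ∈ π) :
    π.erase B ∈ parts N (s \ B) := by
  rw [mem_parts] at h ⊢
  obtain ⟨h1, h2, h3, h4⟩ := h
  refine ⟨fun C hC => h1 C (Finset.mem_of_mem_erase hC),
    fun C hC D hD hne => h2 C (Finset.mem_of_mem_erase hC) D (Finset.mem_of_mem_erase hD) hne,
    ?_, fun C hC => h4 C (Finset.mem_of_mem_erase hC)⟩
  ext x
  simp only [Finset.mem_sdiff]
  constructor
  · intro hx
    obtain ⟨C, hC, hxC⟩ := Finset.mem_sup.1 hx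
    constructor
    · rw [← h3]
      exact Finset.mem_sup.2 ⟨C, Finset.mem_of_mem_erase hC, hxC⟩
    · intro hxB
      have hne : C ≠ B := Finset.ne_of_mem_erase hC
      have : x ∈ C ∩ B := Finset.mem_inter.2 ⟨hxC, hxB⟩
      rw [h2 C (Finset.mem_of_mem_erase hC) B hB hne] at this
      exact Finset.notMem_empty x this
  · rintro ⟨hxs, hxB⟩
    rw [← h3] at hxs
    obtain ⟨C, hC, hxC⟩ := Finset.mem_sup.1 hxs
    have : C ≠ B := by rintro rfl; exact hxB hxC
    exact Finset.mem_sup.2 ⟨C, Finset.mem_erase.2 ⟨this, hC⟩, hxC⟩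

lemma singleton_inter_empty {N : ℕ} {a : Fin N} {s : Finset (Fin N)} (ha : a ∉ s) :
    ({a} : Finset (Fin N)) ∩ s = ∅ := by
  ext x; simp only [Finset.mem_inter, Finset.mem_singleton, Finset.notMem_empty, iff_false]
  rintro ⟨rfl, h⟩; exact ha h

lemma pair_inter_empty {N : ℕ} {a b : Fin N} {s : Finset (Fin N)} (ha : a ∉ s) (hb : b ∈ s) :
    ({a, b} : Finset (Fin N)) ∩ s.erase b = ∅ := by
  ext x
  simp only [Finset.mem_inter, Finset.mem_insert, Finset.mem_singleton, Finset.mem_erase,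
    Finset.notMem_empty, iff_false, not_and]
  rintro (rfl | rfl)
  · intro _; exact ha
  · intro h; exact absurd rfl h

lemma parts_insert_eq {N : ℕ} {s : Finset (Fin N)} {a : Fin N} (ha : a ∉ s) :
    parts N (insert a s) =
      (parts N s).image (insert {a}) ∪
        s.biUnion (fun b => (parts N (s.erase b)).image (insert {a, b})) := by
  ext π
  simp only [Finset.mem_union, Finset.mem_image, Finset.mem_biUnion]
  constructor
  · intro hπ
    have hmem := mem_parts.1 hπ
    have haB : ∃ B ∈ π, a ∈ B := by
      have : a ∈ π.sup id := by rw [hmem.2.2.1]; exact Finset.mem_insert_self a s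
      simpa using Finset.mem_sup.1 this
    obtain ⟨B, hB, haB⟩ := haB
    have hcard : B.card = 1 ∨ B.card = 2 := by
      have h1 : 1 ≤ B.card := Finset.card_pos.2 (hmem.1 B hB)
      have h2 := hmem.2.2.2 B hB
      omega
    rcases hcard with hc | hc
    · -- B = {a}
      obtain ⟨x, hx⟩ := Finset.card_eq_one.1 hc
      subst hx
      obtain rfl : a = x := by simpa using haB
      left
      refine ⟨π.erase {a}, ?_, ?_⟩
      · have := erase_block_mem hπ hB
        have hss : (insert a s) \ {a} = s := by
          rw [Finset.sdiff_singleton_eq_erase, Finset.erase_insert ha]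
        rwa [hss] at this
      · rw [Finset.insert_erase hB]
    · -- B = {a, b}
      obtain ⟨x, y, hxy, hxyB⟩ := Finset.card_eq_two.1 hc
      have hab : ∃ b, b ≠ a ∧ B = {a, b} := by
        subst hxyB
        rcases Finset.mem_insert.1 haB with rfl | h
        · exact ⟨y, fun h => hxy h.symm, rfl⟩
        · obtain rfl : a = y := by simpa using h
          exact ⟨x, hxy, Finset.pair_comm x a⟩
      obtain ⟨b, hba, rfl⟩ := hab
      have hbs : b ∈ s := by
        have : b ∈ insert a s := by
          rw [← hmem.2.2.1]
          exact Finset.mem_sup.2 ⟨_, hB, by simp⟩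
        rcases Finset.mem_insert.1 this with rfl | h
        · exact absurd rfl hba
        · exact h
      right
      refine ⟨b, hbs, π.erase {a, b}, ?_, ?_⟩
      · have := erase_block_mem hπ hB
        have hss : (insert a s) \ {a, b} = s.erase b := by
          ext z
          simp only [Finset.mem_sdiff, Finset.mem_insert, Finset.mem_singleton, Finset.mem_erase,
            not_or]
          constructor
          · rintro ⟨rfl | hz, hza, hzb⟩
            · exact absurd rfl hza
            · exact ⟨hzb, hz⟩
          · rintro ⟨hzb, hz⟩
            exact ⟨Or.inr hz, fun h => ha (h ▸ hz), hzb⟩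
        rwa [hss] at this
      · rw [Finset.insert_erase hB]
  · rintro (⟨π', hπ', rfl⟩ | ⟨b, hbs, π', hπ', rfl⟩)
    · have := insert_block_mem hπ' (Finset.singleton_nonempty a) (by simp)
        (singleton_inter_empty ha)
      have hun : ({a} : Finset (Fin N)) ∪ s = insert a s := by ext z; simp
      rwa [hun] at this
    · have hba : a ≠ b := fun h => ha (h ▸ hbs)
      have := insert_block_mem hπ' ⟨a, by simp⟩
        (le_trans (Finset.card_insert_le _ _) (by simp)) (pair_inter_empty ha hbs)
      have hun : ({a, b} : Finset (Fin N)) ∪ s.erase b = insert a s := by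
        ext z
        simp only [Finset.mem_union, Finset.mem_insert, Finset.mem_singleton, Finset.mem_erase]
        constructor
        · rintro ((rfl | rfl) | ⟨_, hz⟩)
          · exact Or.inl rfl
          · exact Or.inr hbs
          · exact Or.inr hz
        · rintro (rfl | hz)
          · exact Or.inl (Or.inl rfl)
          · by_cases hzb : z = b
            · exact Or.inl (Or.inr hzb)
            · exact Or.inr ⟨hzb, hz⟩
      rwa [hun] at this

noncomputable def g (N : ℕ) (s : Finset (Fin N)) : ℚ :=
  ∑ π ∈ parts N s, (2:ℚ) ^ (π.filter (fun B => B.card = 1)).card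

lemma parts_empty (N : ℕ) : parts N (∅ : Finset (Fin N)) = {∅} := by
  ext π
  simp only [mem_parts, Finset.mem_singleton]
  constructor
  · rintro ⟨h1, _, h3, _⟩
    by_contra hne
    obtain ⟨B, hB⟩ := Finset.nonempty_iff_ne_empty.2 hne
    obtain ⟨x, hx⟩ := h1 B hB
    have : x ∈ π.sup id := Finset.mem_sup.2 ⟨B, hB, hx⟩
    rw [h3] at this
    exact absurd this (Finset.notMem_empty x)
  · rintro rfl
    simp

lemma g_empty (N : ℕ) : g N ∅ = 1 := by
  simp [g, parts_empty]

lemma w_insert_singleton {N : ℕ} {a : Fin N} {π : Finset (Finset (Fin N))}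
    (h : ({a} : Finset (Fin N)) ∉ π) :
    (2:ℚ) ^ (((insert {a} π).filter (fun B => B.card = 1)).card)
      = 2 * (2:ℚ) ^ ((π.filter (fun B => B.card = 1)).card) := by
  rw [Finset.filter_insert, if_pos (Finset.card_singleton a),
    Finset.card_insert_of_notMem (fun hc => h (Finset.mem_filter.1 hc).1), pow_succ]
  ring

lemma w_insert_pair {N : ℕ} {a b : Fin N} (hab : a ≠ b) {π : Finset (Finset (Fin N))} :
    (2:ℚ) ^ (((insert {a, b} π).filter (fun B => B.card = 1)).card)
      = (2:ℚ) ^ ((π.filter (fun B => B.card = 1)).card) := by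
  have hc : ({a, b} : Finset (Fin N)).card = 2 := by
    rw [Finset.card_insert_of_notMem (by simpa using hab), Finset.card_singleton]
  rw [Finset.filter_insert, if_neg (by omega)]

lemma g_insert {N : ℕ} {s : Finset (Fin N)} {a : Fin N} (ha : a ∉ s) :
    g N (insert a s) = 2 * g N s + ∑ b ∈ s, g N (s.erase b) := by
  have hanotin : ∀ {t : Finset (Fin N)} {π : Finset (Finset (Fin N))}, π ∈ parts N t →
      t ⊆ s → ∀ B ∈ π, a ∉ B := by
    intro t π hπ hts B hB hxB
    exact ha (hts (block_subset hπ hB hxB))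
  rw [g, parts_insert_eq ha, Finset.sum_union, Finset.sum_image, Finset.sum_biUnion]
  · congr 1
    · rw [g, Finset.mul_sum]
      apply Finset.sum_congr rfl
      intro π hπ
      exact w_insert_singleton (new_block_not_mem hπ (Finset.singleton_nonempty a)
        (singleton_inter_empty ha))
    · apply Finset.sum_congr rfl
      intro b hb
      rw [Finset.sum_image, g]
      · apply Finset.sum_congr rfl
        intro π hπ
        exact w_insert_pair (by rintro rfl; exact ha hb)
      · intro π hπ π' hπ' heq
        have h1 : ({a, b} : Finset (Fin N)) ∉ π :=
          new_block_not_mem hπ ⟨a, by simp⟩ (pair_inter_empty ha hb)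
        have h2 : ({a, b} : Finset (Fin N)) ∉ π' :=
          new_block_not_mem hπ' ⟨a, by simp⟩ (pair_inter_empty ha hb)
        rw [← Finset.erase_insert h1, heq, Finset.erase_insert h2]
  · -- pairwise disjoint over b
    intro b hb b' hb' hne
    simp only [Finset.mem_coe] at hb hb'
    rw [Function.onFun, Finset.disjoint_left]
    rintro τ hτ hτ'
    obtain ⟨π, hπ, rfl⟩ := Finset.mem_image.1 hτ
    obtain ⟨π', hπ', heq⟩ := Finset.mem_image.1 hτ'
    have hmem : ({a, b'} : Finset (Fin N)) ∈ insert {a, b} π := by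
      rw [← heq]; exact Finset.mem_insert_self _ _
    rcases Finset.mem_insert.1 hmem with h | h
    · -- {a,b'} = {a,b} → b' = b
      have : b' ∈ ({a, b} : Finset (Fin N)) := by rw [← h]; simp
      rcases Finset.mem_insert.1 this with rfl | h2
      · exact ha hb'
      · exact hne (Finset.mem_singleton.1 h2).symm
    · exact hanotin hπ (Finset.erase_subset _ _) _ h (by simp)
  · -- injectivity of insert {a}
    intro π hπ π' hπ' heq
    have h1 : ({a} : Finset (Fin N)) ∉ π :=
      new_block_not_mem hπ (Finset.singleton_nonempty a) (singleton_inter_empty ha)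
    have h2 : ({a} : Finset (Fin N)) ∉ π' :=
      new_block_not_mem hπ' (Finset.singleton_nonempty a) (singleton_inter_empty ha)
    rw [← Finset.erase_insert h1, heq, Finset.erase_insert h2]
  · -- disjoint image vs biUnion
    rw [Finset.disjoint_left]
    rintro τ hτ hτ'
    obtain ⟨π, hπ, rfl⟩ := Finset.mem_image.1 hτ
    obtain ⟨b, hb, π', hπ', heq⟩ := by
      simpa only [Finset.mem_biUnion, Finset.mem_image] using hτ'
    have hmem : ({a, b} : Finset (Fin N)) ∈ insert {a} π := by
      rw [← heq]; exact Finset.mem_insert_self _ _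
    rcases Finset.mem_insert.1 hmem with h | h
    · have : b ∈ ({a} : Finset (Fin N)) := by rw [← h]; simp
      exact ha ((Finset.mem_singleton.1 this) ▸ hb)
    · exact hanotin hπ (le_refl s) _ h (by simp)

lemma g_eq_G {N : ℕ} (s : Finset (Fin N)) : g N s = G s.card := by
  induction s using Finset.strongInduction with
  | _ s ih =>
    rcases s.eq_empty_or_nonempty with rfl | ⟨a, ha⟩
    · rw [g_empty]; simp [G]
    · have hins : insert a (s.erase a) = s := Finset.insert_erase ha
      have hss : s.erase a ⊂ s := Finset.erase_ssubset ha
      have hcard : s.card = (s.erase a).card + 1 := by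
        rw [Finset.card_erase_of_mem ha]
        have := Finset.card_pos.2 ⟨a, ha⟩
        omega
      rw [← hins, g_insert (Finset.notMem_erase a s), hins, ih _ hss, hcard, G_succ]
      congr 1
      have : ∀ b ∈ s.erase a, g N ((s.erase a).erase b) = G ((s.erase a).card - 1) := by
        intro b hb
        rw [ih _ (lt_of_le_of_lt (Finset.erase_subset _ _) hss),
          Finset.card_erase_of_mem hb]
      rw [Finset.sum_congr rfl this, Finset.sum_const, nsmul_eq_mul]

lemma betaS_eq (n : ℕ) : betaS n = G n := by
  have hset : (setPartitions n).filter (fun π => ∀ B ∈ π, B.card ≤ 2)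
      = parts n Finset.univ := by
    ext π
    simp only [setPartitions, parts, IsSetPartition, Finset.mem_filter, Finset.mem_univ,
      true_and]
    tauto
  rw [betaS, hset, ← g]
  rw [g_eq_G, Finset.card_univ, Fintype.card_fin]

open PowerSeries

lemma coeff_pow_lt_zero {F : ℚ⟦X⟧} (hF : constantCoeff F = 0) {j k : ℕ} (h : j < k) :
    coeff j (F ^ k) = 0 := by
  have hdvd : (X : ℚ⟦X⟧) ^ k ∣ F ^ k := pow_dvd_pow_of_dvd (X_dvd_iff.2 hF) k
  exact X_pow_dvd_iff.1 hdvd j h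

lemma coeff_expComp_eq {F : ℚ⟦X⟧} (hF : constantCoeff F = 0) {n m : ℕ} (h : n ≤ m) :
    coeff n (expComp F) = ∑ k ∈ Finset.range (m + 1),
      (k.factorial : ℚ)⁻¹ * coeff n (F ^ k) := by
  rw [expComp, coeff_mk]
  apply Finset.sum_subset
  · intro k hk
    simp only [Finset.mem_range] at hk ⊢; omega
  · intro k _ hk
    simp only [Finset.mem_range, not_lt] at hk
    rw [coeff_pow_lt_zero hF (by omega), mul_zero]

lemma deriv_expComp {F : ℚ⟦X⟧} (hF : constantCoeff F = 0) :
    d⁄dX ℚ (expComp F) = (d⁄dX ℚ F) * expComp F := by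
  ext n
  rw [coeff_derivative, coeff_expComp_eq hF (le_refl (n+1)), Finset.sum_mul]
  have lhs_eq : ∀ k, ((k.factorial : ℚ)⁻¹ * coeff (n+1) (F ^ k)) * (n+1)
      = (k.factorial : ℚ)⁻¹ * coeff n (d⁄dX ℚ (F ^ k)) := by
    intro k
    rw [coeff_derivative]; ring
  rw [Finset.sum_congr rfl (fun k _ => lhs_eq k)]
  have hd : ∀ k : ℕ, (d⁄dX ℚ) (F ^ (k+1)) = ((k:ℚ)+1) • (F ^ k * d⁄dX ℚ F) := by
    intro k
    rw [Derivation.leibniz_pow, Nat.add_sub_cancel, smul_eq_mul,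
      ← Nat.cast_smul_eq_nsmul ℚ (k+1)]
    push_cast
    rfl
  rw [Finset.sum_range_succ']
  simp only [pow_zero, Derivation.map_one_eq_zero, map_zero, mul_zero, add_zero]
  have lhs2 : ∀ k : ℕ, ((k+1).factorial : ℚ)⁻¹ * coeff n (d⁄dX ℚ (F ^ (k+1)))
      = (k.factorial : ℚ)⁻¹ * coeff n (F ^ k * d⁄dX ℚ F) := by
    intro k
    rw [hd k, map_smul, smul_eq_mul]
    have hfac : (((k+1).factorial : ℚ)) = ((k:ℚ)+1) * (k.factorial : ℚ) := by
      rw [Nat.factorial_succ]; push_cast; ring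
    rw [hfac, mul_inv]
    have h1 : ((k:ℚ)+1) ≠ 0 := by positivity
    field_simp
  rw [Finset.sum_congr rfl (fun k _ => lhs2 k)]
  -- now the RHS
  rw [coeff_mul]
  have rhs1 : ∀ p ∈ Finset.HasAntidiagonal.antidiagonal n,
      coeff p.1 (d⁄dX ℚ F) * coeff p.2 (expComp F)
      = ∑ k ∈ Finset.range (n+1),
          (k.factorial:ℚ)⁻¹ * (coeff p.1 (d⁄dX ℚ F) * coeff p.2 (F^k)) := by
    intro p hp
    have hle : p.2 ≤ n := by
      have := Finset.HasAntidiagonal.mem_antidiagonal.1 hp; omega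
    rw [coeff_expComp_eq hF hle, Finset.mul_sum]
    apply Finset.sum_congr rfl
    intros; ring
  rw [Finset.sum_congr rfl rhs1, Finset.sum_comm]
  apply Finset.sum_congr rfl
  intro k _
  rw [← Finset.mul_sum, ← coeff_mul, mul_comm (F ^ k)]

noncomputable def Fq : ℚ⟦X⟧ := C (2:ℚ) * X + C (1/2 : ℚ) * X^2

lemma Fq_const : constantCoeff Fq = 0 := by
  simp [Fq]

lemma dFq : d⁄dX ℚ Fq = C (2:ℚ) + X := by
  rw [Fq, map_add, Derivation.leibniz, Derivation.leibniz, Derivation.leibniz_pow,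
    derivative_C, derivative_C, derivative_X]
  simp only [smul_eq_mul, mul_one, mul_zero, add_zero, zero_add, pow_one, nsmul_eq_mul,
    Nat.cast_ofNat, Nat.add_sub_cancel]
  have h1 : (X : ℚ⟦X⟧) ^ (2-1) = X := by norm_num
  rw [h1]
  have : C (1/2 : ℚ) * (2 * X) = X := by
    have h2 : (2 : ℚ⟦X⟧) = C (2:ℚ) := rfl
    rw [h2, ← mul_assoc, ← map_mul]
    norm_num
  rw [this]

lemma coeff_rec (n : ℕ) : ((n:ℚ)+1) * coeff (n+1) (expComp Fq)
    = 2 * coeff n (expComp Fq) + coeff n (X * expComp Fq) := by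
  have h := deriv_expComp Fq_const
  have h2 := congrArg (coeff n) h
  rw [coeff_derivative, dFq, add_mul, map_add] at h2
  have h3 : coeff n (C (2:ℚ) * expComp Fq) = 2 * coeff n (expComp Fq) :=
    coeff_C_mul n _ 2
  rw [h3] at h2
  rw [← h2]; ring

lemma coeff_zero_expComp : coeff 0 (expComp Fq) = 1 := by
  rw [expComp, coeff_mk]
  simp

lemma coeff_expComp_G : ∀ n, coeff n (expComp Fq) = G n / n.factorial := by
  have key : ∀ n, (∀ m ≤ n, coeff m (expComp Fq) = G m / m.factorial) := by
    intro n
    induction n with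
    | zero =>
      intro m hm
      interval_cases m
      rw [coeff_zero_expComp]; simp [G]
    | succ k ih =>
      intro m hm
      rcases Nat.lt_succ_iff_lt_or_eq.1 (Nat.lt_succ_of_le hm) with h | rfl
      · exact ih m (Nat.lt_succ_iff.1 h)
      · cases k with
        | zero =>
          have h := coeff_rec 0
          rw [coeff_zero_X_mul, coeff_zero_expComp] at h
          norm_num at h
          simpa [G] using h
        | succ j =>
          have h := coeff_rec (j+1)
          rw [coeff_succ_X_mul, ih _ (le_refl _), ih _ (Nat.le_succ _)] at h
          push_cast at h
          have hfac2 : ((j+1).factorial : ℚ) = ((j:ℚ)+1) * (j.factorial : ℚ) := by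
            rw [Nat.factorial_succ]; push_cast; ring
          have hne2 : ((j.factorial : ℚ)) ≠ 0 := by
            exact_mod_cast Nat.factorial_ne_zero _
          have hne3 : ((j:ℚ)+1+1) ≠ 0 := by positivity
          have hne4 : ((j:ℚ)+1) ≠ 0 := by positivity
          have hGj : G (j+1+1) = 2 * G (j+1) + ((j:ℚ)+1) * G j := by
            show G (j+2) = _
            simp [G]
          have hfacs : ((j+1+1).factorial : ℚ) = ((j:ℚ)+1+1) * (((j:ℚ)+1) * (j.factorial : ℚ)) := by
            rw [Nat.factorial_succ, Nat.factorial_succ]; push_cast; ring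
          have h2 : coeff (j+1+1) (expComp Fq) * ((j:ℚ)+1+1)
              = 2 * (G (j+1) / ((j+1).factorial : ℚ)) + G j / (j.factorial : ℚ) := by
            rw [mul_comm]; exact h
          have hx := eq_div_of_mul_eq hne3 h2
          rw [hx, hGj, hfacs, hfac2]
          field_simp
  intro n; exact key n n (le_refl n)

/-- EGF for sequence A005425: `Σ_{n≥0} β_n X^n/n! = exp(2X + X²/2)`. -/
theorem A005425_egf :
    PowerSeries.mk (fun n => betaS n / n.factorial) =
      expComp (PowerSeries.C (R := ℚ) 2 * PowerSeries.X +
        PowerSeries.C (R := ℚ) (1 / 2) * PowerSeries.X ^ 2) := by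
  have hF : (PowerSeries.C (2:ℚ) * PowerSeries.X +
      PowerSeries.C (R := ℚ) (1 / 2) * PowerSeries.X ^ 2 : ℚ⟦X⟧) = Fq := rfl
  rw [hF]
  ext n
  rw [PowerSeries.coeff_mk, coeff_expComp_G, betaS_eq]
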